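/- Let n ≥ 1 and let M be a real n×n matrix. Let S = (1/2)(M + Mᵀ) be its symmetric part, and let x_m and x_M denote respectively the smallest and the largest eigenvalue of the real symmetric matrix S. Then every complex eigenvalue z of M satisfies x_m ≤ Re z ≤ x_M. -/

import Mathlib

open Matrix

lemma bendixson_map_mul {n : ℕ} (A B : Matrix (Fin n) (Fin n) ℝ) :
    (A * B).map Complex.ofReal = A.map Complex.ofReal * B.map Complex.ofReal := by
  ext i j
  simp [Matrix.mul_apply, Matrix.map_apply]

lemma bendixson_term (a : ℂ) (r : ℝ) :
    star a * ((r : ℂ) * a) = (r : ℂ) * (Complex.normSq a : ℂ) := by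
  rw [mul_left_comm, Complex.star_def, ← Complex.normSq_eq_conj_mul_self]

/-- Rayleigh-type decomposition for a real symmetric matrix and a complex vector. -/
lemma bendixson_rayleigh (n : ℕ) (S : Matrix (Fin n) (Fin n) ℝ) (hS : S.IsHermitian)
    (v : Fin n → ℂ) :
    ∃ w : Fin n → ℂ,
      (star v ⬝ᵥ ((S.map Complex.ofReal) *ᵥ v)
          = ∑ i, (hS.eigenvalues i : ℂ) * (Complex.normSq (w i) : ℂ)) ∧
      star v ⬝ᵥ v = ∑ i, (Complex.normSq (w i) : ℂ) := by
  set U : Matrix (Fin n) (Fin n) ℝ := (hS.eigenvectorUnitary : Matrix (Fin n) (Fin n) ℝ) with hU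
  set Uc : Matrix (Fin n) (Fin n) ℂ := U.map Complex.ofReal with hUc
  have hUcH : Ucᴴ = (star U).map Complex.ofReal := by
    ext i j
    simp [Uc, Matrix.conjTranspose_apply, Matrix.map_apply, Matrix.star_apply]
  have hUU : Uc * Ucᴴ = 1 := by
    rw [hUcH, hUc, ← bendixson_map_mul, Matrix.mem_unitaryGroup_iff.mp hS.eigenvectorUnitary.2]
    ext i j
    by_cases h : i = j <;> simp [Matrix.map_apply, Matrix.one_apply, h]
  set w : Fin n → ℂ := Ucᴴ *ᵥ v with hwdef
  have hw : star w = star v ᵥ* Uc := by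
    rw [hwdef, Matrix.star_mulVec, conjTranspose_conjTranspose]
  have hSpec : S.map Complex.ofReal
      = Uc * Matrix.diagonal (fun i => (hS.eigenvalues i : ℂ)) * Ucᴴ := by
    conv_lhs => rw [hS.spectral_theorem, Unitary.conjStarAlgAut_apply]
    rw [hUcH, bendixson_map_mul, bendixson_map_mul]
    congr 2
    ext i j
    by_cases h : i = j <;>
      simp [Matrix.map_apply, Matrix.diagonal_apply, h, RCLike.ofReal_real_eq_id]
  refine ⟨w, ?_, ?_⟩
  · rw [hSpec, ← Matrix.mulVec_mulVec, ← Matrix.mulVec_mulVec,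
      Matrix.dotProduct_mulVec (v := star v), ← hw, ← hwdef]
    rw [dotProduct]
    refine Finset.sum_congr rfl fun i _ => ?_
    rw [Matrix.mulVec_diagonal, Pi.star_apply, bendixson_term]
  · have key : star w ⬝ᵥ w = star v ⬝ᵥ v := by
      rw [hw, hwdef, Matrix.dotProduct_mulVec, Matrix.vecMul_vecMul, hUU, Matrix.vecMul_one]
    rw [← key, dotProduct]
    refine Finset.sum_congr rfl fun i _ => ?_
    rw [Pi.star_apply, Complex.star_def, ← Complex.normSq_eq_conj_mul_self]

/-- **Bendixson inequalities.** For a real `n × n` matrix `M` (`n ≥ 1`) with symmetric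
part `S = (1/2)(M + Mᵀ)`, every complex eigenvalue `z` of (the complexification of) `M`
satisfies `x_m ≤ Re z ≤ x_M`, where `x_m, x_M` are the smallest and largest
eigenvalues of the real symmetric matrix `S`. -/
theorem bendixson_inequalities (n : ℕ) (hn : 1 ≤ n) (M : Matrix (Fin n) (Fin n) ℝ)
    (S : Matrix (Fin n) (Fin n) ℝ) (hSdef : S = (1 / 2 : ℝ) • (M + Mᵀ))
    (hS : S.IsHermitian)
    (z : ℂ) (hz : z ∈ spectrum ℂ (M.map Complex.ofReal)) :
    Finset.univ.inf' ⟨⟨0, hn⟩, Finset.mem_univ _⟩ hS.eigenvalues ≤ z.re ∧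
      z.re ≤ Finset.univ.sup' ⟨⟨0, hn⟩, Finset.mem_univ _⟩ hS.eigenvalues := by
  set N : Matrix (Fin n) (Fin n) ℂ := M.map Complex.ofReal with hN
  -- obtain an eigenvector
  obtain ⟨v, hv, hNv⟩ : ∃ v : Fin n → ℂ, v ≠ 0 ∧ N *ᵥ v = z • v := by
    have h := spectrum.mem_iff.mp hz
    rw [Matrix.isUnit_iff_isUnit_det, isUnit_iff_ne_zero, not_ne_iff] at h
    obtain ⟨v, hv, h0⟩ := (Matrix.exists_mulVec_eq_zero_iff).mpr h
    refine ⟨v, hv, ?_⟩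
    rw [Matrix.sub_mulVec, sub_eq_zero] at h0
    rw [← h0, Matrix.algebraMap_eq_diagonal]
    ext i
    simp [Matrix.mulVec_diagonal, Pi.algebraMap_apply, Algebra.algebraMap_self_apply]
  obtain ⟨w, hw1, hw2⟩ := bendixson_rayleigh n S hS v
  set cr : ℝ := ∑ i, Complex.normSq (w i) with hcr
  have hcre : star v ⬝ᵥ v = (cr : ℂ) := by rw [hw2, hcr]; push_cast; ring
  -- quadratic forms
  have h1 : star v ⬝ᵥ (N *ᵥ v) = z * (cr : ℂ) := by
    rw [hNv, dotProduct_smul, hcre, smul_eq_mul]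
  have hNH : Nᴴ = Mᵀ.map Complex.ofReal := by
    ext i j; simp [hN, Matrix.conjTranspose_apply, Matrix.map_apply]
  have h2 : star v ⬝ᵥ (Nᴴ *ᵥ v) = star (z * (cr : ℂ)) := by
    rw [← h1]
    rw [Matrix.star_dotProduct, Matrix.star_mulVec, conjTranspose_conjTranspose,
      ← Matrix.dotProduct_mulVec]
  -- the S-quadratic form equals Re z * cr
  have hSQ : star v ⬝ᵥ ((S.map Complex.ofReal) *ᵥ v) = ((z.re * cr : ℝ) : ℂ) := by
    have hSc : S.map Complex.ofReal = (1/2 : ℂ) • (N + Nᴴ) := by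
      rw [hSdef, hNH]
      ext i j
      simp [Matrix.map_apply, hN, Matrix.smul_apply, Matrix.add_apply]
      ring
    rw [hSc, Matrix.smul_mulVec, dotProduct_smul, Matrix.add_mulVec,
      dotProduct_add, h1, h2, smul_eq_mul]
    have hconj : star (z * (cr : ℂ)) = star z * (cr : ℂ) := by
      rw [Complex.star_def, RingHom.map_mul, Complex.conj_ofReal]
    rw [hconj, ← add_mul, Complex.star_def, Complex.add_conj]
    push_cast
    ring
  -- real equation
  have hreal : ∑ i, hS.eigenvalues i * Complex.normSq (w i) = z.re * cr := by
    have := hw1.symm.trans hSQ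
    have h3 : ((∑ i, hS.eigenvalues i * Complex.normSq (w i) : ℝ) : ℂ) = ((z.re * cr : ℝ) : ℂ) := by
      rw [← this]; push_cast; ring
    exact_mod_cast h3
  -- cr > 0
  have hcrpos : 0 < cr := by
    have hveq : star v ⬝ᵥ v = ∑ i, (Complex.normSq (v i) : ℂ) := by
      rw [dotProduct]
      refine Finset.sum_congr rfl fun i _ => ?_
      rw [Pi.star_apply, Complex.star_def, ← Complex.normSq_eq_conj_mul_self]
    have : (cr : ℂ) = ∑ i, (Complex.normSq (v i) : ℂ) := by rw [← hcre, hveq]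
    have hcr2 : cr = ∑ i, Complex.normSq (v i) := by exact_mod_cast this
    rw [hcr2]
    obtain ⟨i, hi⟩ := Function.ne_iff.mp hv
    exact Finset.sum_pos' (fun j _ => Complex.normSq_nonneg _)
      ⟨i, Finset.mem_univ i, by simpa [Complex.normSq_pos] using hi⟩
  constructor
  · have hle : (Finset.univ.inf' ⟨⟨0, hn⟩, Finset.mem_univ _⟩ hS.eigenvalues) * cr
        ≤ z.re * cr := by
      rw [← hreal, hcr, Finset.mul_sum]
      exact Finset.sum_le_sum fun i _ => mul_le_mul_of_nonneg_right
        (Finset.inf'_le _ (Finset.mem_univ i)) (Complex.normSq_nonneg _)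
    exact le_of_mul_le_mul_right hle hcrpos
  · have hle : z.re * cr
        ≤ (Finset.univ.sup' ⟨⟨0, hn⟩, Finset.mem_univ _⟩ hS.eigenvalues) * cr := by
      rw [← hreal, hcr, Finset.mul_sum]
      exact Finset.sum_le_sum fun i _ => mul_le_mul_of_nonneg_right
        (Finset.le_sup' _ (Finset.mem_univ i)) (Complex.normSq_nonneg _)
    exact le_of_mul_le_mul_right hle hcrpos
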